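/- Let f be a closed proper convex function on a finite-dimensional real vector space V with dual V*, and let v ∈ V. Then v belongs to E(f) = {v : ∃ a ∈ ℝ, f(x+v) = f(x) + a for all x ∈ V} if and only if the linear functional y ↦ ⟨v,y⟩ is constant on dom(f*), where f* is the Legendre transform of f. Moreover, in that case the constant a equals that constant value of ⟨v,·⟩ on dom(f*). -/

import Mathlib

open NormedSpace

/-- The epigraph of an `EReal`-valued function. -/
def epigraph {V : Type*} (f : V → EReal) : Set (V × ℝ) :=
  {p | f p.1 ≤ (p.2 : EReal)}

/-- A function `f : V → ℝ ∪ {+∞}` (never `-∞`) is closed proper convex if its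
epigraph is closed, convex and nonempty. -/
def ClosedProperConvexOn {V : Type*} [NormedAddCommGroup V] [NormedSpace ℝ V]
    (f : V → EReal) : Prop :=
  (∀ x, f x ≠ ⊥) ∧ IsClosed (epigraph f) ∧ Convex ℝ (epigraph f) ∧
    (epigraph f).Nonempty

/-- The Legendre (Fenchel) transform `f*(y) = sup_{x ∈ dom f} (⟨x,y⟩ - f x)`. -/
noncomputable def legendre {V : Type*} [NormedAddCommGroup V] [NormedSpace ℝ V]
    (f : V → EReal) (y : StrongDual ℝ V) : EReal :=
  ⨆ x : {x : V // f x ≠ ⊤}, ((y x.1 : EReal) - f x.1)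

set_option linter.unusedSectionVars false

lemma ereal_add_coe_cancel (b : EReal) (a : ℝ) : b + (a : EReal) + ((-a : ℝ) : EReal) = b := by
  induction b using EReal.rec with
  | bot => simp
  | coe r => norm_cast; ring
  | top => rw [EReal.top_add_coe, EReal.top_add_coe]

section V
variable {V : Type*} [NormedAddCommGroup V] [NormedSpace ℝ V]

lemma legendre_le {f : V → EReal} {y : StrongDual ℝ V} {u : EReal}
    (h : ∀ x, f x ≠ ⊤ → (y x : EReal) - f x ≤ u) : legendre f y ≤ u :=
  iSup_le fun x => h x.1 x.2

lemma le_legendre {f : V → EReal} (y : StrongDual ℝ V) {x : V} (hx : f x ≠ ⊤) :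
    (y x : EReal) - f x ≤ legendre f y :=
  le_iSup (fun x : {x : V // f x ≠ ⊤} => ((y x.1 : EReal) - f x.1)) ⟨x, hx⟩

lemma legendre_ne_bot {f : V → EReal} (hbot : ∀ x, f x ≠ ⊥) {x0 : V} (hx0 : f x0 ≠ ⊤)
    (y : StrongDual ℝ V) : legendre f y ≠ ⊥ := by
  have h1 : ((y x0 - (f x0).toReal : ℝ) : EReal) ≤ legendre f y := by
    have := le_legendre y hx0
    rwa [← EReal.coe_toReal hx0 (hbot x0), ← EReal.coe_sub] at this
  intro h
  rw [h, le_bot_iff] at h1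
  exact EReal.coe_ne_bot _ h1

-- decomposition of a functional on V × ℝ
lemma phi_apply (φ : (V × ℝ) →L[ℝ] ℝ) (z : V) (r : ℝ) :
    φ (z, r) = φ (z, 0) + r * φ (0, 1) := by
  have h : ((z, r) : V × ℝ) = (z, (0:ℝ)) + r • ((0:V), (1:ℝ)) := by
    simp [Prod.ext_iff]
  rw [h, map_add, map_smul, smul_eq_mul]

lemma s_nonpos {f : V → EReal} {φ : (V × ℝ) →L[ℝ] ℝ} {u : ℝ}
    (hsep : ∀ q ∈ epigraph f, φ q < u) (hne : (epigraph f).Nonempty) : φ (0, 1) ≤ 0 := by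
  by_contra h
  push_neg at h
  obtain ⟨⟨x0, t0⟩, hq⟩ := hne
  obtain ⟨n, hn0, hn2⟩ : ∃ n : ℝ, 0 ≤ n ∧ (u - φ (x0, t0)) / φ (0, 1) < n :=
    ⟨max 0 ((u - φ (x0, t0)) / φ (0, 1)) + 1, by positivity,
      by nlinarith [le_max_right 0 ((u - φ (x0, t0)) / φ (0, 1))]⟩
  have hmem : (x0, t0 + n) ∈ epigraph f := by
    have hq' : f x0 ≤ ((t0 : ℝ) : EReal) := hq
    show f x0 ≤ (((t0 + n : ℝ)) : EReal)
    refine le_trans hq' ?_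
    exact_mod_cast (by linarith : (t0:ℝ) ≤ t0 + n)
  have hlt := hsep _ hmem
  have heq : φ (x0, t0 + n) = φ (x0, t0) + n * φ (0, 1) := by
    rw [phi_apply φ x0 (t0 + n), phi_apply φ x0 t0]; ring
  rw [heq] at hlt
  have h3 := (div_lt_iff₀ h).mp hn2
  linarith


lemma yprime_apply (φ : (V × ℝ) →L[ℝ] ℝ) (z : V) :
    ((-(φ (0, 1)))⁻¹ • φ.comp (ContinuousLinearMap.inl ℝ V ℝ)) z = (-(φ (0, 1)))⁻¹ * φ (z, 0) := by
  simp [ContinuousLinearMap.smul_apply, ContinuousLinearMap.comp_apply]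

lemma pt_of_sep {f : V → EReal} {φ : (V × ℝ) →L[ℝ] ℝ} {u : ℝ}
    (hsep : ∀ q ∈ epigraph f, φ q < u) (hs : φ (0, 1) < 0)
    {z : V} {r : ℝ} (hz : f z ≤ (r : EReal)) :
    (-(φ (0, 1)))⁻¹ * φ (z, 0) - r < (-(φ (0, 1)))⁻¹ * u := by
  have h1 : φ (z, r) < u := hsep _ hz
  rw [phi_apply] at h1
  have hpos : 0 < (-(φ (0, 1)))⁻¹ := by
    apply inv_pos.mpr; linarith
  have h2 := mul_lt_mul_of_pos_left h1 hpos
  have hne : -(φ (0, 1)) ≠ 0 := by intro h0; rw [neg_eq_zero] at h0; linarith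
  have h4 : (-(φ (0, 1)))⁻¹ * (φ (z, 0) + r * φ (0, 1)) =
      (-(φ (0, 1)))⁻¹ * φ (z, 0) - r := by
    field_simp
    rw [add_div, mul_div_cancel_left₀ r (ne_of_lt hs)]
    ring
  linarith [h2, h4]

lemma legendre_of_sep {f : V → EReal} (hbot : ∀ x, f x ≠ ⊥) {φ : (V × ℝ) →L[ℝ] ℝ} {u : ℝ}
    (hsep : ∀ q ∈ epigraph f, φ q < u) (hs : φ (0, 1) < 0) :
    legendre f ((-(φ (0, 1)))⁻¹ • φ.comp (ContinuousLinearMap.inl ℝ V ℝ))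
      ≤ (((-(φ (0, 1)))⁻¹ * u : ℝ) : EReal) := by
  apply legendre_le
  intro z hz
  have hfz : ((f z).toReal : EReal) = f z := EReal.coe_toReal hz (hbot z)
  have h1 := pt_of_sep hsep hs (z := z) (r := (f z).toReal) (le_of_eq hfz.symm)
  rw [← hfz, yprime_apply, ← EReal.coe_sub]
  exact_mod_cast le_of_lt h1


lemma inv_neg_helper {s : ℝ} (hs : s < 0) (a b : ℝ) :
    (-s)⁻¹ * (a + b * s) = (-s)⁻¹ * a - b := by
  have h2 : s ≠ 0 := ne_of_lt hs
  have h3 : s * s⁻¹ = 1 := mul_inv_cancel₀ h2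
  field_simp
  ring

lemma exists_dom {f : V → EReal} (hne : (epigraph f).Nonempty) : ∃ x, f x ≠ ⊤ := by
  obtain ⟨⟨x0, r0⟩, h0⟩ := hne
  exact ⟨x0, ne_top_of_le_ne_top (EReal.coe_ne_top r0) h0⟩

lemma dom_legendre_nonempty {f : V → EReal} (hf : ClosedProperConvexOn f) :
    ∃ y : StrongDual ℝ V, legendre f y ≠ ⊤ := by
  obtain ⟨hbot, hclosed, hconv, hne⟩ := hf
  obtain ⟨⟨x0, r0⟩, h0⟩ := hne
  have hfx0 : f x0 ≠ ⊤ := ne_top_of_le_ne_top (EReal.coe_ne_top r0) h0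
  have hfx : (((f x0).toReal : ℝ) : EReal) = f x0 := EReal.coe_toReal hfx0 (hbot x0)
  set t0 := (f x0).toReal with ht0
  have hp : ((x0, t0 - 1) : V × ℝ) ∉ epigraph f := by
    intro hmem
    have h1 : f x0 ≤ ((t0 - 1 : ℝ) : EReal) := hmem
    rw [← hfx] at h1
    have := EReal.coe_le_coe_iff.mp h1
    linarith
  obtain ⟨φ, u, hsep, hu⟩ := geometric_hahn_banach_closed_point hconv hclosed hp
  have hs0 : φ (0, 1) ≤ 0 := s_nonpos hsep ⟨_, h0⟩
  rcases eq_or_lt_of_le hs0 with hs | hs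
  · exfalso
    have h1 : φ (x0, t0) < u := hsep _ (le_of_eq hfx.symm)
    have e1 := phi_apply φ x0 t0
    have e2 := phi_apply φ x0 (t0 - 1)
    rw [hs] at e1 e2
    rw [e2] at hu
    rw [e1] at h1
    linarith
  · exact ⟨_, ne_top_of_le_ne_top (EReal.coe_ne_top _) (legendre_of_sep hbot hsep hs)⟩

lemma half {f : V → EReal} (hf : ClosedProperConvexOn f) {v : V} {c : ℝ}
    (hc : ∀ y : StrongDual ℝ V, legendre f y ≠ ⊤ → y v = c) :
    ∀ x, f (x + v) ≤ f x + (c : EReal) := by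
  obtain ⟨hbot, hclosed, hconv, hne⟩ := hf
  intro x
  by_cases hx : f x = ⊤
  · rw [hx, EReal.top_add_coe]; exact le_top
  have hfx : (((f x).toReal : ℝ) : EReal) = f x := EReal.coe_toReal hx (hbot x)
  set t := (f x).toReal with htdef
  suffices h : (x + v, t + c) ∈ epigraph f by
    have h' : f (x + v) ≤ ((t + c : ℝ) : EReal) := h
    rw [EReal.coe_add, hfx] at h'
    exact h'
  by_contra hp
  obtain ⟨φ, u, hsep, hu⟩ := geometric_hahn_banach_closed_point hconv hclosed hp
  have hs0 : φ (0, 1) ≤ 0 := s_nonpos hsep hne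
  have hxepi : f x ≤ (t : EReal) := le_of_eq hfx.symm
  have hsplit : φ (x + v, 0) = φ (x, 0) + φ (v, 0) := by
    have e : ((x + v, (0:ℝ)) : V × ℝ) = (x, (0:ℝ)) + (v, (0:ℝ)) := by simp
    rw [e, map_add]
  rcases eq_or_lt_of_le hs0 with hs | hs
  · -- horizontal separation case
    have hdom : ∀ z, f z ≠ ⊤ → φ (z, 0) < u := by
      intro z hz
      have hfz : (((f z).toReal : ℝ) : EReal) = f z := EReal.coe_toReal hz (hbot z)
      have h1 := hsep (z, (f z).toReal) (le_of_eq hfz.symm)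
      rwa [phi_apply, hs, mul_zero, add_zero] at h1
    have hxu : φ (x, 0) < u := hdom x hx
    have hpu : u < φ (x + v, 0) := by
      have h1 := hu
      rwa [phi_apply, hs, mul_zero, add_zero] at h1
    have hyv : 0 < φ (v, 0) := by linarith
    obtain ⟨y0, hy0⟩ := dom_legendre_nonempty ⟨hbot, hclosed, hconv, hne⟩
    obtain ⟨x1, hx1⟩ := exists_dom hne
    have hy0bot : legendre f y0 ≠ ⊥ := legendre_ne_bot hbot hx1 y0
    have hg : (((legendre f y0).toReal : ℝ) : EReal) = legendre f y0 :=
      EReal.coe_toReal hy0 hy0bot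
    set g := (legendre f y0).toReal with hgdef
    have hpsi : ∀ k : ℝ, 0 < k →
        (y0 + k • φ.comp (ContinuousLinearMap.inl ℝ V ℝ)) v = c := by
      intro k hk
      apply hc
      have hb : legendre f (y0 + k • φ.comp (ContinuousLinearMap.inl ℝ V ℝ))
          ≤ ((g + k * u : ℝ) : EReal) := by
        apply legendre_le
        intro z hz
        have hfz : (((f z).toReal : ℝ) : EReal) = f z := EReal.coe_toReal hz (hbot z)
        have h1 : ((y0 z - (f z).toReal : ℝ) : EReal) ≤ (g : EReal) := by
          rw [hg, EReal.coe_sub, hfz]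
          exact le_legendre y0 hz
        have h1' : (y0 z - (f z).toReal : ℝ) ≤ g := EReal.coe_le_coe_iff.mp h1
        have h2 : k * φ (z, 0) ≤ k * u :=
          mul_le_mul_of_nonneg_left (le_of_lt (hdom z hz)) (le_of_lt hk)
        have e : ((y0 + k • φ.comp (ContinuousLinearMap.inl ℝ V ℝ)) z : ℝ)
            = y0 z + k * φ (z, 0) := by
          simp [ContinuousLinearMap.add_apply, ContinuousLinearMap.smul_apply,
            ContinuousLinearMap.comp_apply]
        rw [e, ← hfz, ← EReal.coe_sub]
        exact_mod_cast (by linarith : (y0 z + k * φ (z, 0) - (f z).toReal : ℝ) ≤ g + k * u)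
      exact ne_top_of_le_ne_top (EReal.coe_ne_top _) hb
    have he : ∀ k : ℝ,
        (y0 + k • φ.comp (ContinuousLinearMap.inl ℝ V ℝ)) v = y0 v + k * φ (v, 0) := by
      intro k
      simp [ContinuousLinearMap.add_apply, ContinuousLinearMap.smul_apply,
        ContinuousLinearMap.comp_apply]
    have hk1 := hpsi 1 one_pos
    have hk2 := hpsi 2 two_pos
    rw [he 1] at hk1
    rw [he 2] at hk2
    linarith
  · -- vertical case
    have hdomy' : legendre f ((-(φ (0, 1)))⁻¹ • φ.comp (ContinuousLinearMap.inl ℝ V ℝ)) ≠ ⊤ :=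
      ne_top_of_le_ne_top (EReal.coe_ne_top _) (legendre_of_sep hbot hsep hs)
    have hcv : ((-(φ (0, 1)))⁻¹ • φ.comp (ContinuousLinearMap.inl ℝ V ℝ)) v = c :=
      hc _ hdomy'
    rw [yprime_apply] at hcv
    have h1 : (-(φ (0, 1)))⁻¹ * φ (x, 0) - t < (-(φ (0, 1)))⁻¹ * u :=
      pt_of_sep hsep hs hxepi
    have hpos : 0 < (-(φ (0, 1)))⁻¹ := inv_pos.mpr (by linarith)
    have h2 := mul_lt_mul_of_pos_left hu hpos
    rw [phi_apply φ (x + v) (t + c), hsplit] at h2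
    have h4 := inv_neg_helper hs (φ (x, 0) + φ (v, 0)) (t + c)
    have h5 := mul_add ((-(φ (0, 1)))⁻¹) (φ (x, 0)) (φ (v, 0))
    linarith


lemma key_ge {f : V → EReal} (hbot : ∀ x, f x ≠ ⊥) {v : V} {a : ℝ}
    (hA : ∀ x, f (x + v) = f x + (a : EReal))
    {y : StrongDual ℝ V} (hytop : legendre f y ≠ ⊤) (hybot : legendre f y ≠ ⊥) : a ≤ y v := by
  have hg : (((legendre f y).toReal : ℝ) : EReal) = legendre f y :=
    EReal.coe_toReal hytop hybot
  set g := (legendre f y).toReal with hgdef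
  have hle : legendre f y ≤ ((g + (y v - a) : ℝ) : EReal) := by
    apply legendre_le
    intro x hx
    have hx' : f (x - v) + (a : EReal) = f x := by
      have h := hA (x - v)
      have e : x - v + v = x := by abel
      rw [e] at h
      exact h.symm
    have hxt' : f (x - v) ≠ ⊤ := by
      intro h; rw [h, EReal.top_add_coe] at hx'; exact hx hx'.symm
    have hr' : (((f (x - v)).toReal : ℝ) : EReal) = f (x - v) :=
      EReal.coe_toReal hxt' (hbot _)
    set r' := (f (x - v)).toReal with hr'def
    have hfx : f x = ((r' + a : ℝ) : EReal) := by rw [EReal.coe_add, hr']; exact hx'.symm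
    have hterm : (y (x - v) : EReal) - f (x - v) ≤ legendre f y := le_legendre y hxt'
    rw [← hr', ← EReal.coe_sub, ← hg] at hterm
    have hterm' : y (x - v) - r' ≤ g := EReal.coe_le_coe_iff.mp hterm
    have hyx : y (x - v) + y v = y x := by
      rw [← map_add]; congr 1; abel
    rw [hfx, ← EReal.coe_sub]
    refine EReal.coe_le_coe_iff.mpr ?_
    have e2 : y x - (r' + a) = (y (x - v) - r') + (y v - a) := by rw [← hyx]; ring
    linarith [hterm']
  rw [← hg] at hle
  have := EReal.coe_le_coe_iff.mp hle
  linarith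

lemma shift_neg {f : V → EReal} {v : V} {a : ℝ}
    (hA : ∀ x, f (x + v) = f x + (a : EReal)) :
    ∀ x, f (x + (-v)) = f x + ((-a : ℝ) : EReal) := by
  intro x
  have h := hA (x + (-v))
  have e : x + (-v) + v = x := by abel
  rw [e] at h
  calc f (x + (-v)) = f (x + (-v)) + (a : EReal) + ((-a : ℝ) : EReal) :=
        (ereal_add_coe_cancel _ a).symm
    _ = f x + ((-a : ℝ) : EReal) := by rw [← h]

end V

/-- for a closed proper convex `f` on a finite-dimensional space,
`v ∈ E(f)` iff `y ↦ ⟨v,y⟩` is constant on `dom f*`; moreover, the increment `a`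
equals that constant. -/
theorem mem_E_iff_const_on_dom_legendre
    {V : Type*} [NormedAddCommGroup V] [NormedSpace ℝ V] [FiniteDimensional ℝ V]
    (f : V → EReal) (hf : ClosedProperConvexOn f) (v : V) :
    ((∃ a : ℝ, ∀ x : V, f (x + v) = f x + (a : EReal)) ↔
      (∃ c : ℝ, ∀ y : StrongDual ℝ V, legendre f y ≠ ⊤ → y v = c)) ∧
    (∀ a : ℝ, (∀ x : V, f (x + v) = f x + (a : EReal)) →
      ∀ y : StrongDual ℝ V, legendre f y ≠ ⊤ → y v = a) := by
  obtain ⟨hbot, hclosed, hconv, hne⟩ := hf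
  have hf' : ClosedProperConvexOn f := ⟨hbot, hclosed, hconv, hne⟩
  obtain ⟨x1, hx1⟩ := exists_dom hne
  have part2 : ∀ a : ℝ, (∀ x : V, f (x + v) = f x + (a : EReal)) →
      ∀ y : StrongDual ℝ V, legendre f y ≠ ⊤ → y v = a := by
    intro a ha y hy
    have hyb := legendre_ne_bot hbot hx1 y
    have h1 : a ≤ y v := key_ge hbot ha hy hyb
    have h2 : -a ≤ y (-v) := key_ge hbot (shift_neg ha) hy hyb
    rw [map_neg] at h2
    linarith
  refine ⟨⟨?_, ?_⟩, part2⟩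
  · rintro ⟨a, ha⟩
    exact ⟨a, part2 a ha⟩
  · rintro ⟨c, hc⟩
    refine ⟨c, fun x => le_antisymm (half hf' hc x) ?_⟩
    have hc' : ∀ y : StrongDual ℝ V, legendre f y ≠ ⊤ → y (-v) = -c := by
      intro y hy; rw [map_neg, hc y hy]
    have h2 := half hf' hc' (x + v)
    have e : x + v + (-v) = x := by abel
    rw [e] at h2
    have h3 := add_le_add h2 (le_refl ((c : ℝ) : EReal))
    have h4 : f (x + v) + ((-c : ℝ) : EReal) + ((c : ℝ) : EReal) = f (x + v) := by
      have h5 := ereal_add_coe_cancel (f (x + v)) (-c)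
      rwa [neg_neg] at h5
    rw [h4] at h3
    exact h3
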